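/- arXiv:1702.01542 — 3 statements merged into one kernel-verified Lean document; each statement's English description precedes it below -/
import Mathlib

section
/- Let p be an odd prime and n ≥ 1. The hyperbolic-sine-type map φ : U_n → p^n ℤ_p, u ↦ u - u⁻¹, is a bijection from U_n = 1 + p^n ℤ_p onto p^n ℤ_p. -/
theorem padic_phi_bijective_on_principal_units (p : ℕ) [Fact p.Prime] (hp : p ≠ 2)
    (n : ℕ) (hn : 1 ≤ n) :
    Set.BijOn (fun u : ℚ_[p] => u - u⁻¹)
      {u : ℚ_[p] | ‖u - 1‖ ≤ (p : ℝ) ^ (-(n : ℤ))}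
      {x : ℚ_[p] | ‖x‖ ≤ (p : ℝ) ^ (-(n : ℤ))} := by
  have hprime : p.Prime := Fact.out
  have hp1 : (1 : ℝ) < p := by exact_mod_cast hprime.one_lt
  have hlt : (p : ℝ) ^ (-(n : ℤ)) < 1 := by
    rw [zpow_neg, inv_lt_one₀ (by positivity)]
    exact one_lt_zpow₀ hp1 (by exact_mod_cast hn)
  -- norm of 2 is 1
  have norm_two : ‖(2 : ℚ_[p])‖ = 1 := by
    rcases lt_or_eq_of_le (Padic.norm_int_le_one (2 : ℤ) (p := p)) with h | h
    · rw [Padic.norm_intCast_lt_one_iff] at h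
      exfalso
      have h2 : p ∣ 2 := by exact_mod_cast h
      rcases (Nat.prime_two.eq_one_or_self_of_dvd p h2) with h' | h'
      · exact hprime.one_lt.ne' h'
      · exact hp h'
    · exact_mod_cast h
  -- basic norm facts
  have hnu : ∀ u : ℚ_[p], ‖u - 1‖ < 1 → ‖u‖ = 1 := by
    intro u h
    have : u = 1 + (u - 1) := by ring
    rw [this, Padic.add_eq_max_of_ne (by simp; linarith)]
    simp [max_eq_left h.le]
  have hup1 : ∀ u : ℚ_[p], ‖u - 1‖ < 1 → ‖u + 1‖ = 1 := by
    intro u h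
    have : u + 1 = 2 + (u - 1) := by ring
    rw [this, Padic.add_eq_max_of_ne (by rw [norm_two]; intro hc; exact absurd hc.symm (ne_of_lt h)),
      norm_two, max_eq_left (by linarith)]
  have hmem : ∀ u : ℚ_[p], u ∈ {u : ℚ_[p] | ‖u - 1‖ ≤ (p : ℝ) ^ (-(n : ℤ))} → ‖u - 1‖ < 1 :=
    fun u hu => lt_of_le_of_lt hu hlt
  refine ⟨?_, ?_, ?_⟩
  · -- MapsTo
    intro u hu
    have h1 : ‖u - 1‖ < 1 := hmem u hu
    have hu1 : ‖u‖ = 1 := hnu u h1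
    have hu0 : u ≠ 0 := by intro h; rw [h] at hu1; simp at hu1
    have key : u - u⁻¹ = u⁻¹ * ((u - 1) * (u + 1)) := by field_simp; ring
    show ‖u - u⁻¹‖ ≤ (p : ℝ) ^ (-(n : ℤ))
    rw [key, norm_mul, norm_mul, norm_inv, hu1, hup1 u h1]
    simpa using hu
  · -- InjOn
    intro u hu v hv h
    simp only at h
    have h1u : ‖u - 1‖ < 1 := hmem u hu
    have h1v : ‖v - 1‖ < 1 := hmem v hv
    have hu1 : ‖u‖ = 1 := hnu u h1u
    have hv1 : ‖v‖ = 1 := hnu v h1v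
    have hu0 : u ≠ 0 := by intro hc; rw [hc] at hu1; simp at hu1
    have hv0 : v ≠ 0 := by intro hc; rw [hc] at hv1; simp at hv1
    have huv : ‖u * v - 1‖ < 1 := by
      have : u * v - 1 = u * (v - 1) + (u - 1) := by ring
      rw [this]
      calc ‖u * (v - 1) + (u - 1)‖ ≤ max ‖u * (v - 1)‖ ‖u - 1‖ := Padic.nonarchimedean _ _
        _ < 1 := by rw [norm_mul, hu1, one_mul]; exact max_lt h1v h1u
    have hne : u * v + 1 ≠ 0 := by
      intro hc
      have : u * v - 1 = -2 := by linear_combination hc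
      rw [this, norm_neg, norm_two] at huv
      exact lt_irrefl 1 huv
    have key : (u - v) * (u * v + 1) = (u - u⁻¹ - (v - v⁻¹)) * (u * v) := by
      field_simp; ring
    rw [h, sub_self, zero_mul] at key
    rcases mul_eq_zero.mp key with h' | h'
    · exact sub_eq_zero.mp h'
    · exact absurd h' hne
  · -- SurjOn
    intro x hx
    have hx1 : ‖x‖ ≤ 1 := le_trans hx hlt.le
    set X0 : ℤ_[p] := ⟨x, hx1⟩ with hX0
    have hX0n : ‖X0‖ = ‖x‖ := rfl
    set F : Polynomial ℤ_[p] := Polynomial.X ^ 2 - Polynomial.C X0 * Polynomial.X - 1 with hF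
    have hFe : F.eval 1 = -X0 := by simp [hF]
    have hFd : F.derivative = Polynomial.C 2 * Polynomial.X - Polynomial.C X0 := by
      simp [hF]
      rw [one_add_one_eq_two]; exact (map_ofNat Polynomial.C 2).symm
    have hFd1 : F.derivative.eval 1 = 2 - X0 := by simp [hFd]
    have hX0lt : ‖X0‖ < 1 := by rw [hX0n]; exact lt_of_le_of_lt hx hlt
    have hcast : ((2 - X0 : ℤ_[p]) : ℚ_[p]) = 2 + (-x) := by
      have h2 : ((2 : ℤ_[p]) : ℚ_[p]) = 2 := rfl
      rw [PadicInt.coe_sub, h2]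
      exact sub_eq_add_neg _ _
    have h2x : ‖(2 : ℚ_[p]) + (-x)‖ = 1 := by
      have hne : ‖(2 : ℚ_[p])‖ ≠ ‖(-x : ℚ_[p])‖ := by
        rw [norm_two, norm_neg]
        exact fun hc => absurd hc.symm (ne_of_lt (lt_of_le_of_lt hx hlt))
      rw [Padic.add_eq_max_of_ne hne, norm_two, norm_neg,
        max_eq_left (le_trans hx hlt.le)]
    have hFdn : ‖F.derivative.eval 1‖ = 1 := by
      rw [hFd1, PadicInt.norm_def, hcast, h2x]
    have hnorm : ‖F.eval 1‖ < ‖F.derivative.eval 1‖ ^ 2 := by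
      rw [hFe, norm_neg, hFdn, one_pow]; exact hX0lt
    obtain ⟨z, hz, hz1, -, -⟩ := hensels_lemma hnorm
    rw [Polynomial.coe_aeval_eq_eval] at hz hz1
    rw [hFdn] at hz1
    simp only [hF, Polynomial.eval_sub, Polynomial.eval_pow, Polynomial.eval_mul,
      Polynomial.eval_X, Polynomial.eval_C, Polynomial.eval_one] at hz
    -- move to ℚ_[p]
    set u : ℚ_[p] := (z : ℚ_[p]) with hu
    have heq : u ^ 2 - x * u - 1 = 0 := by
      have := congrArg (fun t : ℤ_[p] => (t : ℚ_[p])) hz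
      push_cast at this
      simpa [hu, hX0] using this
    have hz1' : ‖u - 1‖ < 1 := by
      have : ‖u - 1‖ = ‖z - 1‖ := by rw [PadicInt.norm_def]; push_cast; rfl
      rw [this]; exact hz1
    have hun : ‖u‖ = 1 := hnu u hz1'
    have hu0 : u ≠ 0 := by intro hc; rw [hc] at hun; simp at hun
    have hx_eq : (u - 1) * (u + 1) = x * u := by
      have : u ^ 2 - 1 = x * u := by linear_combination heq
      linear_combination this
    refine ⟨u, ?_, ?_⟩
    · show ‖u - 1‖ ≤ (p : ℝ) ^ (-(n : ℤ))
      have hnn : ‖u - 1‖ * ‖u + 1‖ = ‖x‖ * ‖u‖ := by rw [← norm_mul, ← norm_mul, hx_eq]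
      rw [hup1 u hz1', hun, mul_one, mul_one] at hnn
      rw [hnn]; exact hx
    · show u - u⁻¹ = x
      field_simp
      linear_combination heq
end

section
/- Let p be an odd prime, n ≥ 1, and let f : U_n → ℂ and h : p^n ℤ_p → ℂ be integrable (with respect to Haar measure on ℚ_p restricted to these sets). Then ∫_{U_n} f(u²) du = ∫_{U_n} f(u) du and ∫_{U_n} h(u - u⁻¹) du = ∫_{p^n ℤ_p} h(x) dx. -/
set_option linter.unreachableTactic false
set_option linter.unusedTactic false
set_option linter.unusedVariables false

open MeasureTheory Metric Set

namespace PadicSubAux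

variable {p : ℕ} [Fact p.Prime]

/-- In `ℚ_[p]`, if `‖y‖ < ‖c‖` then `‖c + y‖ = ‖c‖`. -/
lemma norm_add_eq_left {c y : ℚ_[p]} (h : ‖y‖ < ‖c‖) : ‖c + y‖ = ‖c‖ := by
  rw [Padic.add_eq_max_of_ne h.ne']
  exact max_eq_left h.le

lemma norm_two (hp : p ≠ 2) : ‖(2 : ℚ_[p])‖ = 1 := by
  have hle : ‖((2 : ℤ) : ℚ_[p])‖ ≤ 1 := Padic.norm_int_le_one 2
  have hlt : ¬ ‖((2 : ℤ) : ℚ_[p])‖ < 1 := by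
    rw [Padic.norm_intCast_lt_one_iff]
    intro hdvd
    have := Int.le_of_dvd (by norm_num) hdvd
    have hp2 : 2 ≤ p := (Fact.out : p.Prime).two_le
    omega
  push_cast at hle hlt
  linarith [lt_or_eq_of_le hle]

lemma norm_eq_one_of_dist_lt {u : ℚ_[p]} (hu : ‖u - 1‖ < 1) : ‖u‖ = 1 := by
  have h : u = 1 + (u - 1) := by ring
  rw [h, norm_add_eq_left (by simpa using hu)]
  simp

/-- squaring is an isometry near 1 (p odd) -/
lemma sq_isometry (hp : p ≠ 2) {u v : ℚ_[p]} (hu : ‖u - 1‖ < 1) (hv : ‖v - 1‖ < 1) :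
    ‖u ^ 2 - v ^ 2‖ = ‖u - v‖ := by
  have h1 : u ^ 2 - v ^ 2 = (u - v) * (u + v) := by ring
  have h2 : u + v = 2 + ((u - 1) + (v - 1)) := by ring
  have h3 : ‖(u - 1) + (v - 1)‖ < ‖(2 : ℚ_[p])‖ := by
    rw [norm_two hp]
    exact lt_of_le_of_lt (Padic.nonarchimedean _ _) (max_lt hu hv)
  rw [h1, norm_mul, h2, norm_add_eq_left h3, norm_two hp, mul_one]

lemma phi_isometry (hp : p ≠ 2) {u v : ℚ_[p]} (hu : ‖u - 1‖ < 1) (hv : ‖v - 1‖ < 1) :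
    ‖(u - u⁻¹) - (v - v⁻¹)‖ = ‖u - v‖ := by
  have hun : ‖u‖ = 1 := norm_eq_one_of_dist_lt hu
  have hvn : ‖v‖ = 1 := norm_eq_one_of_dist_lt hv
  have hu0 : u ≠ 0 := by intro h; rw [h] at hun; simp at hun
  have hv0 : v ≠ 0 := by intro h; rw [h] at hvn; simp at hvn
  have key : (u - u⁻¹) - (v - v⁻¹) = (u - v) * (1 + (u * v)⁻¹) := by
    field_simp
    all_goals ring
  have h4 : u * v + 1 = 2 + ((u - 1) * (v - 1) + (u - 1) + (v - 1)) := by ring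
  have h5 : ‖(u - 1) * (v - 1) + (u - 1) + (v - 1)‖ < ‖(2 : ℚ_[p])‖ := by
    rw [norm_two hp]
    refine lt_of_le_of_lt (Padic.nonarchimedean _ _) (max_lt ?_ hv)
    refine lt_of_le_of_lt (Padic.nonarchimedean _ _) (max_lt ?_ hu)
    rw [norm_mul]
    calc ‖u - 1‖ * ‖v - 1‖ ≤ 1 * ‖v - 1‖ := by
          exact mul_le_mul_of_nonneg_right hu.le (norm_nonneg _)
      _ < 1 := by simpa using hv
  have h6 : ‖1 + (u * v)⁻¹‖ = 1 := by
    have huv : u * v ≠ 0 := mul_ne_zero hu0 hv0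
    have : 1 + (u * v)⁻¹ = (u * v)⁻¹ * (u * v + 1) := by field_simp; all_goals ring
    rw [this, norm_mul, norm_inv, norm_mul, hun, hvn, h4, norm_add_eq_left h5,
      norm_two hp]
    norm_num
  rw [key, norm_mul, h6, mul_one]

/-- surjectivity of squaring on 1 + p^n ℤ_p -/
lemma sq_surj (hp : p ≠ 2) {r : ℝ} (hr1 : r < 1) {v : ℚ_[p]} (hv : ‖v - 1‖ ≤ r) :
    ∃ u : ℚ_[p], ‖u - 1‖ ≤ r ∧ u ^ 2 = v := by
  have hvlt : ‖v - 1‖ < 1 := lt_of_le_of_lt hv hr1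
  have hvn : ‖v‖ = 1 := norm_eq_one_of_dist_lt hvlt
  set w : ℤ_[p] := ⟨v, by rw [hvn]⟩ with hw
  set F : Polynomial ℤ_[p] := Polynomial.X ^ 2 - Polynomial.C w with hF
  have hevF : ∀ z : ℤ_[p], F.eval z = z ^ 2 - w := by intro z; simp [hF]; all_goals ring
  have hevF' : ∀ z : ℤ_[p], (Polynomial.derivative F).eval z = 2 * z := by
    intro z; simp [hF]; all_goals ring_nf; all_goals simp
  have hcond : ‖F.eval 1‖ < ‖(Polynomial.derivative F).eval 1‖ ^ 2 := by
    rw [hevF, hevF', mul_one, one_pow]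
    have h1 : ‖(1 : ℤ_[p]) - w‖ = ‖v - 1‖ := by
      rw [PadicInt.norm_def]
      push_cast
      exact norm_sub_rev _ _
    have h2 : ‖(2 : ℤ_[p])‖ = 1 := by rw [PadicInt.norm_def]; push_cast; exact norm_two hp
    rw [h1, h2]; simpa using hvlt
  obtain ⟨z, hz0, hz1, -, -⟩ := hensels_lemma hcond
  rw [Polynomial.coe_aeval_eq_eval, hevF] at hz0
  rw [Polynomial.coe_aeval_eq_eval, hevF', mul_one] at hz1
  have h2 : ‖(2 : ℤ_[p])‖ = 1 := by rw [PadicInt.norm_def]; push_cast; exact norm_two hp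
  rw [h2] at hz1
  have hzn : ‖(z : ℚ_[p]) - 1‖ < 1 := by
    have : ‖z - 1‖ = ‖(z : ℚ_[p]) - 1‖ := by rw [PadicInt.norm_def]; push_cast; all_goals rfl
    rw [← this]; exact hz1
  refine ⟨(z : ℚ_[p]), ?_, ?_⟩
  · have hsq : (z : ℚ_[p]) ^ 2 = v := by
      have := sub_eq_zero.mp hz0
      have : ((z ^ 2 : ℤ_[p]) : ℚ_[p]) = ((w : ℤ_[p]) : ℚ_[p]) := by rw [this]
      push_cast at this
      rw [this]
    have := sq_isometry hp hzn (show ‖(1:ℚ_[p]) - 1‖ < 1 by norm_num)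
    rw [one_pow, hsq] at this
    rw [← this]; exact hv
  · have := sub_eq_zero.mp hz0
    have : ((z ^ 2 : ℤ_[p]) : ℚ_[p]) = ((w : ℤ_[p]) : ℚ_[p]) := by rw [this]
    push_cast at this
    rw [this]

/-- surjectivity of u - u⁻¹ from 1 + p^nℤ_p onto p^nℤ_p -/
lemma phi_surj (hp : p ≠ 2) {r : ℝ} (hr1 : r < 1) {x : ℚ_[p]} (hx : ‖x‖ ≤ r) :
    ∃ u : ℚ_[p], ‖u - 1‖ ≤ r ∧ u - u⁻¹ = x := by
  have hxlt : ‖x‖ < 1 := lt_of_le_of_lt hx hr1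
  set w : ℤ_[p] := ⟨x, hxlt.le⟩ with hw
  set F : Polynomial ℤ_[p] :=
    Polynomial.X ^ 2 - Polynomial.C w * Polynomial.X - Polynomial.C 1 with hF
  have hevF : ∀ z : ℤ_[p], F.eval z = z ^ 2 - w * z - 1 := by intro z; simp [hF]; all_goals ring
  have hevF' : ∀ z : ℤ_[p], (Polynomial.derivative F).eval z = 2 * z - w := by
    intro z; simp [hF]; all_goals ring_nf; all_goals simp
  have hwn : ‖w‖ = ‖x‖ := by rw [PadicInt.norm_def]
  have h2 : ‖(2 : ℤ_[p])‖ = 1 := by rw [PadicInt.norm_def]; push_cast; exact norm_two hp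
  have hd1 : ‖(Polynomial.derivative F).eval 1‖ = 1 := by
    rw [hevF', mul_one]
    rw [show (2 : ℤ_[p]) - w = 2 + (-w) by ring]
    have : ‖(-w : ℤ_[p])‖ < ‖(2 : ℤ_[p])‖ := by rw [h2, norm_neg, hwn]; exact hxlt
    calc ‖(2 : ℤ_[p]) + -w‖ = ‖((2 : ℤ_[p]) : ℚ_[p]) + ((-w : ℤ_[p]) : ℚ_[p])‖ := by
          rw [PadicInt.norm_def]; push_cast; all_goals rfl
      _ = ‖((2 : ℤ_[p]) : ℚ_[p])‖ := norm_add_eq_left (by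
          rw [← PadicInt.norm_def, ← PadicInt.norm_def]; exact this)
      _ = 1 := by push_cast; exact norm_two hp
  have hcond : ‖F.eval 1‖ < ‖(Polynomial.derivative F).eval 1‖ ^ 2 := by
    rw [hd1, hevF]
    have : (1 : ℤ_[p]) ^ 2 - w * 1 - 1 = -w := by ring
    rw [this, norm_neg, hwn]
    simpa using hxlt
  obtain ⟨z, hz0, hz1, -, -⟩ := hensels_lemma hcond
  rw [Polynomial.coe_aeval_eq_eval, hevF] at hz0
  rw [Polynomial.coe_aeval_eq_eval, hd1] at hz1
  set u : ℚ_[p] := (z : ℚ_[p]) with hu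
  have hzn : ‖u - 1‖ < 1 := by
    have : ‖z - 1‖ = ‖u - 1‖ := by rw [PadicInt.norm_def]; push_cast; all_goals rfl
    rw [← this]; exact hz1
  have hun : ‖u‖ = 1 := norm_eq_one_of_dist_lt hzn
  have hu0 : u ≠ 0 := by intro h; rw [h] at hun; simp at hun
  have heq : u ^ 2 - x * u - 1 = 0 := by
    have : ((z ^ 2 - w * z - 1 : ℤ_[p]) : ℚ_[p]) = 0 := by rw [hz0]; rfl
    push_cast at this
    have hwx : ((w : ℤ_[p]) : ℚ_[p]) = x := rfl
    rw [hu, ← hwx]; exact this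
  have hinv : u⁻¹ = u - x := by
    apply inv_eq_of_mul_eq_one_right
    have : u * (u - x) = u ^ 2 - x * u := by ring
    rw [this]
    linear_combination heq
  have hphix : u - u⁻¹ = x := by rw [hinv]; ring
  refine ⟨u, ?_, hphix⟩
  have := phi_isometry hp hzn (show ‖(1:ℚ_[p]) - 1‖ < 1 by norm_num)
  rw [hphix] at this
  simp only [inv_one, sub_self, sub_zero] at this
  rw [← this]; exact hx

/-- Borel σ-algebra is generated by closed balls of positive radius. -/
lemma borel_eq_balls [m : MeasurableSpace ℚ_[p]] [BorelSpace ℚ_[p]] :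
    m = MeasurableSpace.generateFrom
      {s : Set ℚ_[p] | ∃ c : ℚ_[p], ∃ ρ : ℝ, 0 < ρ ∧ s = closedBall c ρ} := by
  refine le_antisymm ?_ (MeasurableSpace.generateFrom_le ?_)
  · rw [BorelSpace.measurable_eq (α := ℚ_[p]), borel]
    refine MeasurableSpace.generateFrom_le ?_
    intro U hU
    replace hU : IsOpen U := hU
    obtain ⟨D, hDc, hDd⟩ := TopologicalSpace.exists_countable_dense ℚ_[p]
    have hp1 : (1 : ℝ) < p := by exact_mod_cast (Fact.out : p.Prime).one_lt
    have hrpos : ∀ k : ℕ, (0 : ℝ) < (p : ℝ) ^ (-(k : ℤ)) := fun k =>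
      zpow_pos (by linarith) _
    have hUeq : U = ⋃ y ∈ D, ⋃ k : ℕ,
        ⋃ (_ : closedBall y ((p : ℝ) ^ (-(k : ℤ))) ⊆ U), closedBall y ((p : ℝ) ^ (-(k : ℤ))) := by
      apply subset_antisymm
      · intro x hx
        obtain ⟨ε, hε, hball⟩ := Metric.isOpen_iff.mp hU x hx
        obtain ⟨k, hk⟩ := exists_pow_lt_of_lt_one hε
          (show (p : ℝ)⁻¹ < 1 by rw [inv_lt_one_iff₀]; right; exact hp1)
        have hkr : (p : ℝ) ^ (-(k : ℤ)) < ε := by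
          rwa [zpow_neg, zpow_natCast, ← inv_pow]
        obtain ⟨y, hy⟩ := Metric.dense_iff.mp hDd x _ (hrpos k)
        have hyx : y ∈ closedBall x ((p : ℝ) ^ (-(k : ℤ))) := ball_subset_closedBall hy.1
        have hbeq : closedBall x ((p : ℝ) ^ (-(k : ℤ))) = closedBall y ((p : ℝ) ^ (-(k : ℤ))) :=
          IsUltrametricDist.closedBall_eq_of_mem hyx
        have hsub : closedBall y ((p : ℝ) ^ (-(k : ℤ))) ⊆ U := by
          rw [← hbeq]; exact (closedBall_subset_ball hkr).trans hball
        refine mem_biUnion hy.2 ?_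
        refine mem_iUnion.mpr ⟨k, mem_iUnion.mpr ⟨hsub, ?_⟩⟩
        rw [← hbeq]; exact mem_closedBall_self (hrpos k).le
      · refine iUnion₂_subset fun y _ => iUnion_subset fun k => iUnion_subset fun hsub => hsub
    rw [hUeq]
    refine MeasurableSet.biUnion hDc fun y _ => MeasurableSet.iUnion fun k =>
      MeasurableSet.iUnion fun _ =>
        MeasurableSpace.measurableSet_generateFrom ⟨y, _, hrpos k, rfl⟩
  · rintro s ⟨c, ρ, -, rfl⟩
    exact measurableSet_closedBall

lemma isPiSystem_balls :
    IsPiSystem {s : Set ℚ_[p] | ∃ c : ℚ_[p], ∃ ρ : ℝ, 0 < ρ ∧ s = closedBall c ρ} := by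
  rintro s ⟨c1, ρ1, hρ1, rfl⟩ t ⟨c2, ρ2, hρ2, rfl⟩ ⟨x, hx1, hx2⟩
  have e1 : closedBall c1 ρ1 = closedBall x ρ1 := IsUltrametricDist.closedBall_eq_of_mem hx1
  have e2 : closedBall c2 ρ2 = closedBall x ρ2 := IsUltrametricDist.closedBall_eq_of_mem hx2
  rcases le_total ρ1 ρ2 with h | h
  · have : closedBall c1 ρ1 ⊆ closedBall c2 ρ2 := by
      rw [e1, e2]; exact closedBall_subset_closedBall h
    rw [inter_eq_left.mpr this]
    exact ⟨c1, ρ1, hρ1, rfl⟩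
  · have : closedBall c2 ρ2 ⊆ closedBall c1 ρ1 := by
      rw [e1, e2]; exact closedBall_subset_closedBall h
    rw [inter_eq_right.mpr this]
    exact ⟨c2, ρ2, hρ2, rfl⟩

lemma measure_closedBall_eq [MeasurableSpace ℚ_[p]] [BorelSpace ℚ_[p]]
    (μ : Measure ℚ_[p]) [μ.IsAddHaarMeasure] (c c' : ℚ_[p]) (ρ : ℝ) :
    μ (closedBall c ρ) = μ (closedBall c' ρ) := by
  rw [← measure_preimage_add μ (c - c') (closedBall c ρ)]
  congr 1
  ext x
  simp only [mem_preimage, mem_closedBall, dist_eq_norm]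
  rw [show c - c' + x - c = x - c' by ring]

/-- The key measure lemma: a measurable surjective isometry between two closed balls
in `ℚ_[p]` pushes the restricted Haar measure to the restricted Haar measure. -/
lemma map_restrict_ball [MeasurableSpace ℚ_[p]] [BorelSpace ℚ_[p]]
    (μ : Measure ℚ_[p]) [μ.IsAddHaarMeasure] (ψ : ℚ_[p] → ℚ_[p]) (hψ : Measurable ψ)
    (a b : ℚ_[p]) {r : ℝ} (hr : 0 < r)
    (hmaps : MapsTo ψ (closedBall a r) (closedBall b r))
    (hiso : ∀ u ∈ closedBall a r, ∀ v ∈ closedBall a r, ‖ψ u - ψ v‖ = ‖u - v‖)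
    (hsurj : SurjOn ψ (closedBall a r) (closedBall b r)) :
    Measure.map ψ (μ.restrict (closedBall a r)) = μ.restrict (closedBall b r) := by
  set S := closedBall a r with hS
  set T := closedBall b r with hT
  have hSm : MeasurableSet S := measurableSet_closedBall
  have hTm : MeasurableSet T := measurableSet_closedBall
  have hfin : μ S < ⊤ := (isCompact_closedBall a r).measure_lt_top
  haveI : IsFiniteMeasure (Measure.map ψ (μ.restrict S)) := ⟨by
    rw [Measure.map_apply hψ MeasurableSet.univ, preimage_univ,
      Measure.restrict_apply MeasurableSet.univ, univ_inter]
    exact hfin⟩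
  refine ext_of_generate_finite _ borel_eq_balls isPiSystem_balls ?_ ?_
  · rintro s ⟨c, ρ, hρ, rfl⟩
    have hsm : MeasurableSet (closedBall c ρ) := measurableSet_closedBall
    rw [Measure.map_apply hψ hsm, Measure.restrict_apply (hψ hsm),
      Measure.restrict_apply hsm]
    by_cases hne : (closedBall c ρ ∩ T).Nonempty
    · obtain ⟨x, hxs, hxT⟩ := hne
      have eT : T = closedBall x r := IsUltrametricDist.closedBall_eq_of_mem hxT
      have es : closedBall c ρ = closedBall x ρ := IsUltrametricDist.closedBall_eq_of_mem hxs
      rcases le_or_gt r ρ with hrρ | hrρ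
      · -- T ⊆ ball
        have hTs : T ⊆ closedBall c ρ := by
          rw [eT, es]; exact closedBall_subset_closedBall hrρ
        have h1 : ψ ⁻¹' closedBall c ρ ∩ S = S :=
          inter_eq_right.mpr fun u hu => hTs (hmaps hu)
        have h2 : closedBall c ρ ∩ T = T := inter_eq_right.mpr hTs
        rw [h1, h2, hS, hT]
        exact measure_closedBall_eq μ a b r
      · -- ball ⊆ T
        have hsT : closedBall c ρ ⊆ T := by
          rw [eT, es]; exact closedBall_subset_closedBall hrρ.le
        have hcT : c ∈ T := hsT (mem_closedBall_self hρ.le)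
        obtain ⟨c', hc'S, hc'⟩ := hsurj hcT
        have hpre : ψ ⁻¹' closedBall c ρ ∩ S = closedBall c' ρ := by
          apply subset_antisymm
          · rintro u ⟨hu1, hu2⟩
            rw [mem_closedBall, dist_eq_norm, ← hiso u hu2 c' hc'S, hc']
            rw [mem_preimage, mem_closedBall, dist_eq_norm] at hu1
            exact hu1
          · intro u hu
            have huS : u ∈ S := by
              have : closedBall c' ρ ⊆ closedBall c' r := closedBall_subset_closedBall hrρ.le
              have hc'b : closedBall a r = closedBall c' r :=
                IsUltrametricDist.closedBall_eq_of_mem hc'S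
              rw [hS, hc'b]; exact this hu
            refine ⟨?_, huS⟩
            rw [mem_preimage, mem_closedBall, dist_eq_norm, ← hc', hiso u huS c' hc'S]
            rw [mem_closedBall, dist_eq_norm] at hu
            exact hu
        have h2 : closedBall c ρ ∩ T = closedBall c ρ := inter_eq_left.mpr hsT
        rw [hpre, h2]
        exact measure_closedBall_eq μ c' c ρ
    · rw [not_nonempty_iff_eq_empty] at hne
      have h1 : ψ ⁻¹' closedBall c ρ ∩ S = ∅ := by
        rw [eq_empty_iff_forall_notMem]
        rintro u ⟨hu1, hu2⟩
        have : ψ u ∈ closedBall c ρ ∩ T := ⟨hu1, hmaps hu2⟩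
        rw [hne] at this
        exact this
      rw [h1, hne]
  · rw [Measure.map_apply hψ MeasurableSet.univ, preimage_univ,
      Measure.restrict_apply MeasurableSet.univ, univ_inter,
      Measure.restrict_apply MeasurableSet.univ, univ_inter, hS, hT]
    exact measure_closedBall_eq μ a b r

end PadicSubAux

open PadicSubAux

theorem padic_substitution_formulas (p : ℕ) [Fact p.Prime] (hp : p ≠ 2)
    (n : ℕ) (hn : 1 ≤ n)
    [MeasurableSpace ℚ_[p]] [BorelSpace ℚ_[p]]
    (μ : Measure ℚ_[p]) [μ.IsAddHaarMeasure]
    (f h : ℚ_[p] → ℂ)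
    (hf : IntegrableOn f {u : ℚ_[p] | ‖u - 1‖ ≤ (p : ℝ) ^ (-(n : ℤ))} μ)
    (hh : IntegrableOn h {x : ℚ_[p] | ‖x‖ ≤ (p : ℝ) ^ (-(n : ℤ))} μ) :
    (∫ u in {u : ℚ_[p] | ‖u - 1‖ ≤ (p : ℝ) ^ (-(n : ℤ))}, f (u ^ 2) ∂μ) =
      (∫ u in {u : ℚ_[p] | ‖u - 1‖ ≤ (p : ℝ) ^ (-(n : ℤ))}, f u ∂μ) ∧
    (∫ u in {u : ℚ_[p] | ‖u - 1‖ ≤ (p : ℝ) ^ (-(n : ℤ))}, h (u - u⁻¹) ∂μ) =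
      (∫ x in {x : ℚ_[p] | ‖x‖ ≤ (p : ℝ) ^ (-(n : ℤ))}, h x ∂μ) := by
  set r : ℝ := (p : ℝ) ^ (-(n : ℤ)) with hrdef
  have hp1 : (1 : ℝ) < p := by exact_mod_cast (Fact.out : p.Prime).one_lt
  have hr0 : 0 < r := zpow_pos (by linarith) _
  have hr1 : r < 1 := by
    have h : (p : ℝ) ^ (-(n : ℤ)) < (p : ℝ) ^ (0 : ℤ) :=
      zpow_lt_zpow_right₀ hp1 (by omega)
    rw [zpow_zero] at h
    exact h
  have hSset : {u : ℚ_[p] | ‖u - 1‖ ≤ r} = Metric.closedBall 1 r := by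
    ext u; simp [Metric.mem_closedBall, dist_eq_norm]
  have hTset : {x : ℚ_[p] | ‖x‖ ≤ r} = Metric.closedBall 0 r := by
    ext x; simp [Metric.mem_closedBall, dist_eq_norm]
  rw [hSset] at hf
  rw [hTset] at hh
  rw [hSset, hTset]
  have hrlt : ∀ u : ℚ_[p], u ∈ Metric.closedBall 1 r → ‖u - 1‖ < 1 := by
    intro u hu
    rw [Metric.mem_closedBall, dist_eq_norm] at hu
    exact lt_of_le_of_lt hu hr1
  constructor
  · -- squaring
    have hmeas : Measurable (fun u : ℚ_[p] => u ^ 2) := (continuous_pow 2).measurable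
    have hmaps : Set.MapsTo (fun u : ℚ_[p] => u ^ 2)
        (Metric.closedBall 1 r) (Metric.closedBall 1 r) := by
      intro u hu
      rw [Metric.mem_closedBall, dist_eq_norm]
      have := sq_isometry hp (hrlt u hu) (show ‖(1:ℚ_[p]) - 1‖ < 1 by norm_num)
      rw [one_pow] at this
      rw [this]
      rw [Metric.mem_closedBall, dist_eq_norm] at hu
      exact hu
    have hiso : ∀ u ∈ Metric.closedBall (1 : ℚ_[p]) r, ∀ v ∈ Metric.closedBall (1 : ℚ_[p]) r,
        ‖(fun u : ℚ_[p] => u ^ 2) u - (fun u : ℚ_[p] => u ^ 2) v‖ = ‖u - v‖ := fun u hu v hv =>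
      sq_isometry hp (hrlt u hu) (hrlt v hv)
    have hsurj : Set.SurjOn (fun u : ℚ_[p] => u ^ 2)
        (Metric.closedBall 1 r) (Metric.closedBall 1 r) := by
      intro v hv
      rw [Metric.mem_closedBall, dist_eq_norm] at hv
      obtain ⟨u, hu1, hu2⟩ := sq_surj hp hr1 hv
      exact ⟨u, by rw [Metric.mem_closedBall, dist_eq_norm]; exact hu1, hu2⟩
    have hmap := map_restrict_ball μ _ hmeas 1 1 hr0 hmaps hiso hsurj
    calc (∫ u in Metric.closedBall (1:ℚ_[p]) r, f (u ^ 2) ∂μ)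
        = ∫ y, f y ∂(Measure.map (fun u : ℚ_[p] => u ^ 2)
            (μ.restrict (Metric.closedBall 1 r))) := by
          rw [integral_map hmeas.aemeasurable]
          rw [hmap]; exact hf.1
      _ = ∫ u in Metric.closedBall (1:ℚ_[p]) r, f u ∂μ := by rw [hmap]
  · -- phi
    have hmeas : Measurable (fun u : ℚ_[p] => u - u⁻¹) := measurable_id.sub measurable_inv
    have hiso : ∀ u ∈ Metric.closedBall (1 : ℚ_[p]) r, ∀ v ∈ Metric.closedBall (1 : ℚ_[p]) r,
        ‖(fun u : ℚ_[p] => u - u⁻¹) u - (fun u : ℚ_[p] => u - u⁻¹) v‖ = ‖u - v‖ :=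
      fun u hu v hv => phi_isometry hp (hrlt u hu) (hrlt v hv)
    have hmaps : Set.MapsTo (fun u : ℚ_[p] => u - u⁻¹)
        (Metric.closedBall 1 r) (Metric.closedBall 0 r) := by
      intro u hu
      rw [Metric.mem_closedBall, dist_eq_norm, sub_zero]
      have := phi_isometry hp (hrlt u hu) (show ‖(1:ℚ_[p]) - 1‖ < 1 by norm_num)
      simp only [inv_one, sub_self, sub_zero] at this
      rw [this]
      rw [Metric.mem_closedBall, dist_eq_norm] at hu
      exact hu
    have hsurj : Set.SurjOn (fun u : ℚ_[p] => u - u⁻¹)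
        (Metric.closedBall 1 r) (Metric.closedBall 0 r) := by
      intro x hx
      rw [Metric.mem_closedBall, dist_eq_norm, sub_zero] at hx
      obtain ⟨u, hu1, hu2⟩ := phi_surj hp hr1 hx
      exact ⟨u, by rw [Metric.mem_closedBall, dist_eq_norm]; exact hu1, hu2⟩
    have hmap := map_restrict_ball μ _ hmeas 1 0 hr0 hmaps hiso hsurj
    calc (∫ u in Metric.closedBall (1:ℚ_[p]) r, h (u - u⁻¹) ∂μ)
        = ∫ y, h y ∂(Measure.map (fun u : ℚ_[p] => u - u⁻¹)
            (μ.restrict (Metric.closedBall 1 r))) := by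
          rw [integral_map hmeas.aemeasurable]
          rw [hmap]; exact hh.1
      _ = ∫ x in Metric.closedBall (0:ℚ_[p]) r, h x ∂μ := by rw [hmap]
end

section
/- Let p be an odd prime and n ≥ 1. The map (u₀, u) ↦ ((u u₀)^{1/2}, φ((u/u₀)^{1/2})) is a bijection from U_n × U_n onto U_n × p^n ℤ_p which preserves the product Haar measure, where v^{1/2} denotes the unique square root in U_n and φ(v) = v - v⁻¹. -/
set_option maxHeartbeats 1000000

open MeasureTheory
open scoped Classical

/-- The square root in the higher principal unit group `U_n = 1 + p^n ℤ_p`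
(unique for odd `p`), defined by choice. -/
noncomputable def padicSqrt (p : ℕ) [Fact p.Prime] (n : ℕ) (v : ℚ_[p]) : ℚ_[p] :=
  if h : ∃ w : ℚ_[p], ‖w - 1‖ ≤ (p : ℝ) ^ (-(n : ℤ)) ∧ w ^ 2 = v then h.choose else 0

section Aux
open Metric Set


lemma iso_map_measure {X : Type*} [MetricSpace X] [MeasurableSpace X] [BorelSpace X]
    [SecondCountableTopology X]
    (hX : ∀ x y z : X, dist x z ≤ max (dist x y) (dist y z))
    (ν : Measure X)
    (hν : ∀ (c c' : X) (t : ℝ), ν (closedBall c t) = ν (closedBall c' t))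
    (hfin : ∀ (c : X) (t : ℝ), ν (closedBall c t) < ⊤)
    (f : X → X) (hf : Measurable f) (s₀ t₀ : X) (r : ℝ) (hr : 0 < r)
    (hmaps : MapsTo f (closedBall s₀ r) (closedBall t₀ r))
    (hsurj : SurjOn f (closedBall s₀ r) (closedBall t₀ r))
    (hisom : ∀ a ∈ closedBall s₀ r, ∀ b ∈ closedBall s₀ r, dist (f a) (f b) = dist a b) :
    Measure.map f (ν.restrict (closedBall s₀ r)) = ν.restrict (closedBall t₀ r) := by
  have hcc : ∀ (c y : X) (t : ℝ), y ∈ closedBall c t → closedBall c t = closedBall y t := by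
    intro c y t hy
    ext z
    simp only [mem_closedBall] at *
    constructor
    · intro hz
      exact le_trans (hX z c y) (max_le hz (by rwa [dist_comm]))
    · intro hz
      exact le_trans (hX z y c) (max_le hz hy)
  set C : Set (Set X) := {A | ∃ c t, 0 < t ∧ A = closedBall c t} with hC
  have hgen : (inferInstance : MeasurableSpace X) = MeasurableSpace.generateFrom C := by
    rw [BorelSpace.measurable_eq (α := X)]
    refine TopologicalSpace.IsTopologicalBasis.borel_eq_generateFrom ?_
    refine TopologicalSpace.isTopologicalBasis_of_isOpen_of_nhds ?_ ?_
    · rintro A ⟨c, t, ht, rfl⟩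
      rw [Metric.isOpen_iff]
      intro z hz
      refine ⟨t, ht, fun y hy => ?_⟩
      exact mem_closedBall.2
        (le_trans (hX y z c) (max_le (mem_ball.1 hy).le (mem_closedBall.1 hz)))
    · intro x u hx hu
      obtain ⟨ε, hε, hball⟩ := Metric.isOpen_iff.1 hu x hx
      exact ⟨closedBall x (ε/2), ⟨x, ε/2, by linarith, rfl⟩, mem_closedBall_self (by linarith),
        fun y hy => hball (mem_ball.2 (lt_of_le_of_lt (mem_closedBall.1 hy) (by linarith)))⟩
  have hpi : IsPiSystem C := by
    rintro A ⟨c₁, t₁, ht₁, rfl⟩ B ⟨c₂, t₂, ht₂, rfl⟩ ⟨x, hx1, hx2⟩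
    refine ⟨x, min t₁ t₂, lt_min ht₁ ht₂, ?_⟩
    rw [hcc _ _ _ hx1, hcc _ _ _ hx2]
    ext z; simp only [mem_inter_iff, mem_closedBall, le_min_iff]
  have hfin1 : IsFiniteMeasure (Measure.map f (ν.restrict (closedBall s₀ r))) := by
    constructor
    rw [Measure.map_apply hf MeasurableSet.univ, Set.preimage_univ, Measure.restrict_apply_univ]
    exact hfin _ _
  have hfin2 : IsFiniteMeasure (ν.restrict (closedBall t₀ r)) := by
    constructor
    rw [Measure.restrict_apply_univ]; exact hfin _ _
  refine ext_of_generate_finite C hgen hpi ?_ ?_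
  · rintro B ⟨c, t, ht, rfl⟩
    rw [Measure.map_apply hf measurableSet_closedBall,
      Measure.restrict_apply (hf measurableSet_closedBall),
      Measure.restrict_apply measurableSet_closedBall]
    by_cases hne : (closedBall c t ∩ closedBall t₀ r).Nonempty
    · obtain ⟨y, hyB, hyT⟩ := hne
      obtain ⟨a₀, ha₀, rfl⟩ := hsurj hyT
      have hTy : closedBall t₀ r = closedBall (f a₀) r := hcc _ _ _ hyT
      have hBy : closedBall c t = closedBall (f a₀) t := hcc _ _ _ hyB
      have hSy : closedBall s₀ r = closedBall a₀ r := hcc _ _ _ ha₀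
      have h1 : f ⁻¹' closedBall c t ∩ closedBall s₀ r = closedBall a₀ (min t r) := by
        ext a
        constructor
        · rintro ⟨ha1, ha2⟩
          have hd := hisom a ha2 a₀ ha₀
          refine mem_closedBall.2 (le_min_iff.2 ⟨?_, ?_⟩)
          · rw [← hd]
            exact mem_closedBall.1 (hBy ▸ (mem_preimage.1 ha1))
          · exact mem_closedBall.1 (hSy ▸ ha2)
        · intro h
          have h' := le_min_iff.1 (mem_closedBall.1 h)
          have haS : a ∈ closedBall s₀ r := by rw [hSy]; exact mem_closedBall.2 h'.2
          refine ⟨mem_preimage.2 ?_, haS⟩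
          rw [hBy]
          exact mem_closedBall.2 (by rw [hisom a haS a₀ ha₀]; exact h'.1)
      have h2 : closedBall c t ∩ closedBall t₀ r = closedBall (f a₀) (min t r) := by
        rw [hTy, hBy]; ext z; simp only [mem_inter_iff, mem_closedBall, le_min_iff]
      rw [h1, h2, hν]
    · rw [not_nonempty_iff_eq_empty] at hne
      have : f ⁻¹' closedBall c t ∩ closedBall s₀ r = ∅ := by
        rw [eq_empty_iff_forall_notMem]
        rintro a ⟨h1, h2⟩
        exact eq_empty_iff_forall_notMem.1 hne (f a) ⟨h1, hmaps h2⟩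
      rw [this, hne]
  · rw [Measure.map_apply hf MeasurableSet.univ, Set.preimage_univ,
      Measure.restrict_apply_univ, Measure.restrict_apply_univ]
    exact hν _ _ _


section PadicAlg
variable {p : ℕ} [Fact p.Prime] {n : ℕ}

local notation "r" => ((p:ℝ)) ^ (-(n:ℤ))

lemma pk_r_pos : (0:ℝ) < r := zpow_pos (by exact_mod_cast (Fact.out : p.Prime).pos) _

lemma pk_r_lt_one (hn : 1 ≤ n) : (r:ℝ) < 1 :=
  zpow_lt_one_of_neg₀ (by exact_mod_cast (Fact.out : p.Prime).one_lt) (by omega)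

lemma pk_norm_two (hp : p ≠ 2) : ‖(2:ℚ_[p])‖ = 1 := by
  have h1 : ‖((2:ℤ) : ℚ_[p])‖ ≤ 1 := Padic.norm_int_le_one _
  have h2 : ¬ ((p:ℤ) ∣ (2:ℤ)) := by
    intro h
    have hd : p ∣ 2 := by exact_mod_cast h
    have h1 := Nat.le_of_dvd (by norm_num) hd
    have h2 := (Fact.out : p.Prime).two_le
    omega
  have h3 : ¬ (‖((2:ℤ) : ℚ_[p])‖ < 1) := fun h => h2 ((Padic.norm_intCast_lt_one_iff (k := 2)).1 h)
  have : ‖((2:ℤ) : ℚ_[p])‖ = 1 := le_antisymm h1 (not_lt.1 h3)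
  simpa using this

variable (hn : 1 ≤ n) (hp : p ≠ 2)
include hn

lemma pk_norm_one_of_mem {v : ℚ_[p]} (hv : ‖v - 1‖ ≤ r) : ‖v‖ = 1 := by
  have h1 : ‖v - 1‖ < 1 := lt_of_le_of_lt hv (pk_r_lt_one hn)
  have : v = 1 + (v - 1) := by ring
  rw [this, Padic.add_eq_max_of_ne (by simp; exact ne_of_gt h1)]
  simp [le_of_lt h1]

lemma pk_add_norm_one {u v : ℚ_[p]} (hp : p ≠ 2) (hu : ‖u - 1‖ ≤ r) (hv : ‖v - 1‖ ≤ r) :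
    ‖u + v‖ = 1 := by
  have hr1 := pk_r_lt_one (p := p) hn
  have h1 : ‖(u - 1) + (v - 1)‖ < 1 :=
    lt_of_le_of_lt (Padic.nonarchimedean _ _) (max_lt (lt_of_le_of_lt hu hr1) (lt_of_le_of_lt hv hr1))
  have h2 : u + v = 2 + ((u - 1) + (v - 1)) := by ring
  rw [h2, Padic.add_eq_max_of_ne (by rw [pk_norm_two hp]; exact ne_of_gt h1),
    pk_norm_two hp]
  simp [le_of_lt h1]

lemma pk_mul_mem {u v : ℚ_[p]} (hu : ‖u - 1‖ ≤ r) (hv : ‖v - 1‖ ≤ r) : ‖u * v - 1‖ ≤ r := by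
  have h : u * v - 1 = (u - 1) * v + (v - 1) := by ring
  rw [h]
  refine le_trans (Padic.nonarchimedean _ _) (max_le ?_ hv)
  rw [norm_mul, pk_norm_one_of_mem hn hv, mul_one]; exact hu

lemma pk_inv_mem {v : ℚ_[p]} (hv : ‖v - 1‖ ≤ r) : ‖v⁻¹ - 1‖ ≤ r := by
  have h1 := pk_norm_one_of_mem hn hv
  have h0 : v ≠ 0 := fun h => by simp [h] at h1
  have h : v⁻¹ - 1 = (1 - v) * v⁻¹ := by field_simp
  rw [h, norm_mul, norm_inv, pk_norm_one_of_mem hn hv, inv_one, mul_one, norm_sub_rev]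
  exact hv

lemma pk_sq_iso {u v : ℚ_[p]} (hp : p ≠ 2) (hu : ‖u - 1‖ ≤ r) (hv : ‖v - 1‖ ≤ r) :
    ‖u ^ 2 - v ^ 2‖ = ‖u - v‖ := by
  have h : u ^ 2 - v ^ 2 = (u - v) * (u + v) := by ring
  rw [h, norm_mul, pk_add_norm_one hn hp hu hv, mul_one]

lemma pk_exists_sqrt {v : ℚ_[p]} (hp : p ≠ 2) (hv : ‖v - 1‖ ≤ r) :
    ∃ w : ℚ_[p], ‖w - 1‖ ≤ r ∧ w ^ 2 = v := by
  have hr1 := pk_r_lt_one (p := p) hn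
  have hv1 : ‖v‖ = 1 := pk_norm_one_of_mem hn hv
  set vz : ℤ_[p] := ⟨v, le_of_eq hv1⟩ with hvz
  set F : Polynomial ℤ_[p] := Polynomial.X ^ 2 - Polynomial.C vz with hF
  have hFeval : ∀ z : ℤ_[p], F.eval z = z ^ 2 - vz := by intro z; simp [hF]
  have hFderiv : F.derivative.eval 1 = 2 := by
    simp [hF, Polynomial.derivative_sub, Polynomial.derivative_X_pow]; exact one_add_one_eq_two
  have hnormF : ‖F.eval 1‖ < ‖F.derivative.eval 1‖ ^ 2 := by
    rw [hFeval, hFderiv]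
    have e1 : ‖(1:ℤ_[p]) ^ 2 - vz‖ = ‖1 - v‖ := by
      rw [← PadicInt.padic_norm_e_of_padicInt]; push_cast [hvz]; norm_num; rfl
    have e2 : ‖(2:ℤ_[p])‖ = 1 := by
      rw [← PadicInt.padic_norm_e_of_padicInt]; push_cast; exact pk_norm_two hp
    rw [e1, e2, one_pow, norm_sub_rev]
    exact lt_of_le_of_lt hv hr1
  obtain ⟨z, hz, -, -, -⟩ := hensels_lemma hnormF
  rw [Polynomial.coe_aeval_eq_eval, hFeval] at hz
  have hz2 : (z : ℚ_[p]) ^ 2 = v := by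
    have : (z:ℤ_[p]) ^ 2 = vz := by linear_combination hz
    calc (z : ℚ_[p]) ^ 2 = ((z ^ 2 : ℤ_[p]) : ℚ_[p]) := by push_cast; ring
    _ = v := by rw [this]
  set w : ℚ_[p] := (z : ℚ_[p]) with hw
  have hwn : ‖w‖ = 1 := by
    have : ‖w‖ ^ 2 = 1 := by rw [← norm_pow, hz2, hv1]
    nlinarith [norm_nonneg w]
  have hprod : ‖w - 1‖ * ‖w + 1‖ = ‖v - 1‖ := by
    rw [← norm_mul]; congr 1; linear_combination hz2
  have hsum : (1:ℝ) ≤ max ‖w - 1‖ ‖w + 1‖ := by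
    have h2w : ‖(w - 1) + (w + 1)‖ = 1 := by
      have : (w - 1) + (w + 1) = 2 * w := by ring
      rw [this, norm_mul, pk_norm_two hp, hwn, mul_one]
    rw [← h2w]; exact Padic.nonarchimedean _ _
  have hle1 : ‖w - 1‖ ≤ 1 := by
    rw [sub_eq_add_neg]
    refine le_trans (Padic.nonarchimedean w (-1)) ?_
    simp [hwn]
  have hle2 : ‖w + 1‖ ≤ 1 := by
    refine le_trans (Padic.nonarchimedean w 1) ?_
    simp [hwn]
  rcases le_max_iff.1 hsum with h | h
  · -- ‖w - 1‖ = 1, use -w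
    have h1 : ‖w - 1‖ = 1 := le_antisymm hle1 h
    refine ⟨-w, ?_, by rw [neg_sq]; exact hz2⟩
    have e : ‖-w - 1‖ = ‖w + 1‖ := by rw [show -w - 1 = -(w+1) by ring, norm_neg]
    rw [e]
    calc ‖w + 1‖ = ‖v - 1‖ := by rw [← hprod, h1, one_mul]
    _ ≤ r := hv
  · have h1 : ‖w + 1‖ = 1 := le_antisymm hle2 h
    refine ⟨w, ?_, hz2⟩
    calc ‖w - 1‖ = ‖v - 1‖ := by rw [← hprod, h1, mul_one]
    _ ≤ r := hv

end PadicAlg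

section PadicAlg2
variable {p : ℕ} [Fact p.Prime] {n : ℕ}
local notation "r" => ((p:ℝ)) ^ (-(n:ℤ))
variable (hn : 1 ≤ n) (hp : p ≠ 2)
include hn hp

lemma pk_one_mem : ‖(1:ℚ_[p]) - 1‖ ≤ r := by simp [le_of_lt (zpow_pos (show (0:ℝ) < p by exact_mod_cast (Fact.out : p.Prime).pos) _)]

lemma pk_sqrt_spec {v : ℚ_[p]} (hv : ‖v - 1‖ ≤ r) :
    ‖padicSqrt p n v - 1‖ ≤ r ∧ (padicSqrt p n v) ^ 2 = v := by
  rw [padicSqrt, dif_pos (pk_exists_sqrt hn hp hv)]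
  exact (pk_exists_sqrt hn hp hv).choose_spec

lemma pk_sqrt_unique {w w' : ℚ_[p]} (hw : ‖w - 1‖ ≤ r) (hw' : ‖w' - 1‖ ≤ r)
    (h : w ^ 2 = w' ^ 2) : w = w' := by
  have h1 : (w - w') * (w + w') = 0 := by linear_combination h
  have h2 : w + w' ≠ 0 := by
    intro h0
    have := pk_add_norm_one hn hp hw hw'
    rw [h0] at this; simp at this
  have := mul_eq_zero.1 h1
  rcases this with h3 | h3
  · exact sub_eq_zero.1 h3
  · exact absurd h3 h2

lemma pk_sqrt_sq {w : ℚ_[p]} (hw : ‖w - 1‖ ≤ r) : padicSqrt p n (w ^ 2) = w := by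
  have hmem : ‖w ^ 2 - 1‖ ≤ r := by
    rw [pow_two]; exact pk_mul_mem hn hw hw
  obtain ⟨h1, h2⟩ := pk_sqrt_spec hn hp hmem
  exact pk_sqrt_unique hn hp h1 hw h2

lemma pk_sqrt_iso {u v : ℚ_[p]} (hu : ‖u - 1‖ ≤ r) (hv : ‖v - 1‖ ≤ r) :
    ‖padicSqrt p n u - padicSqrt p n v‖ = ‖u - v‖ := by
  obtain ⟨ha1, ha2⟩ := pk_sqrt_spec hn hp hu
  obtain ⟨hb1, hb2⟩ := pk_sqrt_spec hn hp hv
  rw [← pk_sq_iso hn hp ha1 hb1, ha2, hb2]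

lemma pk_phi_mem {w : ℚ_[p]} (hw : ‖w - 1‖ ≤ r) : ‖w - w⁻¹‖ ≤ r := by
  have hwn := pk_norm_one_of_mem hn hw
  have h0 : w ≠ 0 := fun h => by simp [h] at hwn
  have h : w - w⁻¹ = (w ^ 2 - 1) * w⁻¹ := by field_simp
  rw [h, norm_mul, norm_inv, hwn, inv_one, mul_one]
  have := pk_sq_iso hn hp hw (pk_one_mem hn hp)
  rw [one_pow] at this
  rw [this]
  simpa using hw

lemma pk_phi_iso {w w' : ℚ_[p]} (hw : ‖w - 1‖ ≤ r) (hw' : ‖w' - 1‖ ≤ r) :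
    ‖(w - w⁻¹) - (w' - w'⁻¹)‖ = ‖w - w'‖ := by
  have hwn := pk_norm_one_of_mem hn hw
  have hwn' := pk_norm_one_of_mem hn hw'
  have h0 : w ≠ 0 := fun h => by simp [h] at hwn
  have h0' : w' ≠ 0 := fun h => by simp [h] at hwn'
  have h : (w - w⁻¹) - (w' - w'⁻¹) = (w - w') * (1 + (w * w')⁻¹) := by
    field_simp; ring
  rw [h, norm_mul, pk_add_norm_one hn hp (pk_one_mem hn hp)
    (pk_inv_mem hn (pk_mul_mem hn hw hw')), mul_one]

lemma pk_phi_surj {x : ℚ_[p]} (hx : ‖x‖ ≤ r) :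
    ∃ w : ℚ_[p], ‖w - 1‖ ≤ r ∧ w - w⁻¹ = x := by
  have hr1 := pk_r_lt_one (p := p) hn
  have hrpos : (0:ℝ) < r := zpow_pos (show (0:ℝ) < p by exact_mod_cast (Fact.out : p.Prime).pos) _
  have h4 : ‖(4:ℚ_[p])‖ = 1 := by
    have : (4:ℚ_[p]) = 2 * 2 := by norm_num
    rw [this, norm_mul, pk_norm_two hp, mul_one]
  have hmem : ‖(1 + x ^ 2 / 4) - 1‖ ≤ r := by
    have e : (1 + x ^ 2 / 4) - 1 = x ^ 2 / 4 := by ring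
    rw [e, norm_div, h4, div_one, norm_pow]
    calc ‖x‖ ^ 2 ≤ r ^ 2 := by nlinarith [norm_nonneg x]
    _ ≤ r := by nlinarith
  obtain ⟨hs1, hs2⟩ := pk_sqrt_spec hn hp hmem
  set s := padicSqrt p n (1 + x ^ 2 / 4) with hsdef
  refine ⟨s + x / 2, ?_, ?_⟩
  · have e : (s + x / 2) - 1 = (s - 1) + x / 2 := by ring
    rw [e]
    refine le_trans (Padic.nonarchimedean _ _) (max_le hs1 ?_)
    rw [norm_div, pk_norm_two hp, div_one]
    exact hx
  · have hmul : (s + x / 2) * (s - x / 2) = 1 := by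
      have : (s + x / 2) * (s - x / 2) = s ^ 2 - x ^ 2 / 4 := by ring
      rw [this, hs2]; ring
    have hinv : (s + x / 2)⁻¹ = s - x / 2 := inv_eq_of_mul_eq_one_right hmul
    rw [hinv]; ring


lemma pk_sqrt_continuous : Continuous (padicSqrt p n) := by
  have hrpos : (0:ℝ) < r :=
    zpow_pos (show (0:ℝ) < p by exact_mod_cast (Fact.out : p.Prime).pos) _
  set U : Set ℚ_[p] := {v | ‖v - 1‖ ≤ r} with hU
  have hUball : U = closedBall 1 r := by
    ext v; simp [hU, mem_closedBall, dist_eq_norm]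
  have hzero : ∀ v ∉ U, padicSqrt p n v = 0 := by
    intro v hv
    rw [padicSqrt, dif_neg]
    rintro ⟨w, hw1, hw2⟩
    refine hv ?_
    show ‖v - 1‖ ≤ r
    rw [← hw2, pow_two]
    exact pk_mul_mem hn hw1 hw1
  have hUopen : IsOpen U := by
    rw [Metric.isOpen_iff]
    intro v hv
    refine ⟨r, hrpos, fun y hy => ?_⟩
    have e : y - 1 = (y - v) + (v - 1) := by ring
    show ‖y - 1‖ ≤ r
    rw [e]
    refine le_trans (Padic.nonarchimedean _ _) (max_le ?_ hv)
    rw [← dist_eq_norm]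
    exact le_of_lt (mem_ball.1 hy)
  have hcont : ContinuousOn (padicSqrt p n) U := by
    refine LipschitzOnWith.continuousOn (K := 1) (LipschitzOnWith.of_dist_le_mul ?_)
    intro x hx y hy
    rw [dist_eq_norm, dist_eq_norm, pk_sqrt_iso hn hp hx hy]
    simp
  rw [continuous_iff_continuousAt]
  intro v
  by_cases hv : v ∈ U
  · exact hcont.continuousAt (hUopen.mem_nhds hv)
  · have hUc : IsOpen Uᶜ := (hUball ▸ Metric.isClosed_closedBall).isOpen_compl
    have heq : padicSqrt p n =ᶠ[nhds v] fun _ => 0 :=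
      Filter.eventually_of_mem (hUc.mem_nhds hv) (fun x hx => hzero x hx)
    exact ContinuousAt.congr continuousAt_const heq.symm

end PadicAlg2
end Aux

theorem padic_kernel_change_of_variables (p : ℕ) [Fact p.Prime] (hp : p ≠ 2)
    (n : ℕ) (hn : 1 ≤ n)
    [MeasurableSpace ℚ_[p]] [BorelSpace ℚ_[p]]
    (μ : Measure ℚ_[p]) [μ.IsAddHaarMeasure] [SigmaFinite μ] :
    Set.BijOn
        (fun x : ℚ_[p] × ℚ_[p] =>
          (padicSqrt p n (x.2 * x.1),
            padicSqrt p n (x.2 * x.1⁻¹) - (padicSqrt p n (x.2 * x.1⁻¹))⁻¹))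
        ({u : ℚ_[p] | ‖u - 1‖ ≤ (p : ℝ) ^ (-(n : ℤ))} ×ˢ
          {u : ℚ_[p] | ‖u - 1‖ ≤ (p : ℝ) ^ (-(n : ℤ))})
        ({u : ℚ_[p] | ‖u - 1‖ ≤ (p : ℝ) ^ (-(n : ℤ))} ×ˢ
          {x : ℚ_[p] | ‖x‖ ≤ (p : ℝ) ^ (-(n : ℤ))}) ∧
    MeasurePreserving
        (fun x : ℚ_[p] × ℚ_[p] =>
          (padicSqrt p n (x.2 * x.1),
            padicSqrt p n (x.2 * x.1⁻¹) - (padicSqrt p n (x.2 * x.1⁻¹))⁻¹))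
        ((μ.prod μ).restrict
          ({u : ℚ_[p] | ‖u - 1‖ ≤ (p : ℝ) ^ (-(n : ℤ))} ×ˢ
            {u : ℚ_[p] | ‖u - 1‖ ≤ (p : ℝ) ^ (-(n : ℤ))}))
        ((μ.prod μ).restrict
          ({u : ℚ_[p] | ‖u - 1‖ ≤ (p : ℝ) ^ (-(n : ℤ))} ×ˢ
            {x : ℚ_[p] | ‖x‖ ≤ (p : ℝ) ^ (-(n : ℤ))})) := by
  classical
  open Metric Set in
  have hrpos : (0:ℝ) < (p : ℝ) ^ (-(n : ℤ)) :=
    zpow_pos (show (0:ℝ) < p by exact_mod_cast (Fact.out : p.Prime).pos) _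
  set r : ℝ := (p : ℝ) ^ (-(n : ℤ)) with hrdef
  set U : Set ℚ_[p] := {u : ℚ_[p] | ‖u - 1‖ ≤ r} with hUdef
  set D : Set ℚ_[p] := {x : ℚ_[p] | ‖x‖ ≤ r} with hDdef
  set F := (fun x : ℚ_[p] × ℚ_[p] =>
          (padicSqrt p n (x.2 * x.1),
            padicSqrt p n (x.2 * x.1⁻¹) - (padicSqrt p n (x.2 * x.1⁻¹))⁻¹)) with hFdef
  have hUball : U = Metric.closedBall (1:ℚ_[p]) r := by
    ext v; simp [hUdef, Metric.mem_closedBall, dist_eq_norm]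
  have hDball : D = Metric.closedBall (0:ℚ_[p]) r := by
    ext v; simp [hDdef, Metric.mem_closedBall, dist_eq_norm]
  have hS : U ×ˢ U = Metric.closedBall ((1,1) : ℚ_[p] × ℚ_[p]) r := by
    rw [hUball, closedBall_prod_same]
  have hT : U ×ˢ D = Metric.closedBall ((1,0) : ℚ_[p] × ℚ_[p]) r := by
    rw [hUball, hDball, closedBall_prod_same]
  -- membership unfolding
  have hmemU : ∀ v : ℚ_[p], v ∈ U ↔ ‖v - 1‖ ≤ r := fun v => Iff.rfl
  -- maps to
  have hmaps : Set.MapsTo F (U ×ˢ U) (U ×ˢ D) := by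
    rintro ⟨u₀, u⟩ hx
    obtain ⟨h0, h1⟩ := Set.mem_prod.1 hx
    refine Set.mem_prod.2 ⟨?_, ?_⟩
    · exact (pk_sqrt_spec hn hp (pk_mul_mem hn h1 h0)).1
    · exact pk_phi_mem hn hp (pk_sqrt_spec hn hp (pk_mul_mem hn h1 (pk_inv_mem hn h0))).1
  -- isometry
  have hiso : ∀ a ∈ U ×ˢ U, ∀ b ∈ U ×ˢ U, dist (F a) (F b) = dist a b := by
    rintro ⟨u₀, u⟩ ha ⟨v₀, v⟩ hb
    obtain ⟨ha0, ha1⟩ := Set.mem_prod.1 ha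
    obtain ⟨hb0, hb1⟩ := Set.mem_prod.1 hb
    have ha0' : ‖u₀ - 1‖ ≤ r := ha0
    have ha1' : ‖u - 1‖ ≤ r := ha1
    have hb0' : ‖v₀ - 1‖ ≤ r := hb0
    have hb1' : ‖v - 1‖ ≤ r := hb1
    have nu₀ := pk_norm_one_of_mem hn ha0'
    have nu := pk_norm_one_of_mem hn ha1'
    have nv₀ := pk_norm_one_of_mem hn hb0'
    have nv := pk_norm_one_of_mem hn hb1'
    have hu₀0 : u₀ ≠ 0 := fun h => by simp [h] at nu₀
    have hv₀0 : v₀ ≠ 0 := fun h => by simp [h] at nv₀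
    rw [Prod.dist_eq, Prod.dist_eq]
    have e1 : dist (F (u₀,u)).1 (F (v₀,v)).1 = ‖u * u₀ - v * v₀‖ := by
      simp only [hFdef]
      rw [dist_eq_norm, pk_sqrt_iso hn hp (pk_mul_mem hn ha1' ha0') (pk_mul_mem hn hb1' hb0')]
    have e2 : dist (F (u₀,u)).2 (F (v₀,v)).2 = ‖u * v₀ - v * u₀‖ := by
      simp only [hFdef]
      rw [dist_eq_norm,
        pk_phi_iso hn hp (pk_sqrt_spec hn hp (pk_mul_mem hn ha1' (pk_inv_mem hn ha0'))).1
          (pk_sqrt_spec hn hp (pk_mul_mem hn hb1' (pk_inv_mem hn hb0'))).1,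
        pk_sqrt_iso hn hp (pk_mul_mem hn ha1' (pk_inv_mem hn ha0'))
          (pk_mul_mem hn hb1' (pk_inv_mem hn hb0'))]
      have e : u * u₀⁻¹ - v * v₀⁻¹ = (u * v₀ - v * u₀) * (u₀ * v₀)⁻¹ := by
        field_simp
      rw [e, norm_mul, norm_inv, norm_mul, nu₀, nv₀, one_mul, inv_one, mul_one]
    rw [e1, e2, dist_eq_norm, dist_eq_norm]
    apply le_antisymm
    · apply max_le
      · have e : u * u₀ - v * v₀ = u₀ * (u - v) + v * (u₀ - v₀) := by ring
        rw [e]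
        refine le_trans (Padic.nonarchimedean _ _) ?_
        rw [norm_mul, norm_mul, nu₀, nv, one_mul, one_mul]
        exact max_le (le_max_right _ _) (le_max_left _ _)
      · have e : u * v₀ - v * u₀ = v₀ * (u - v) + (-v) * (u₀ - v₀) := by ring
        rw [e]
        refine le_trans (Padic.nonarchimedean _ _) ?_
        rw [norm_mul, norm_mul, nv₀, norm_neg, nv, one_mul, one_mul]
        exact max_le (le_max_right _ _) (le_max_left _ _)
    · apply max_le
      · have h1 : ‖u₀ - v₀‖ = ‖(u * u₀ - v * v₀) + (-(u * v₀ - v * u₀))‖ := by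
          have e : (u * u₀ - v * v₀) + (-(u * v₀ - v * u₀)) = (u + v) * (u₀ - v₀) := by ring
          rw [e, norm_mul, pk_add_norm_one hn hp ha1' hb1', one_mul]
        rw [h1]
        refine le_trans (Padic.nonarchimedean _ _) ?_
        rw [norm_neg]
      · have h1 : ‖u - v‖ = ‖(u * u₀ - v * v₀) + (u * v₀ - v * u₀)‖ := by
          have e : (u * u₀ - v * v₀) + (u * v₀ - v * u₀) = (u₀ + v₀) * (u - v) := by ring
          rw [e, norm_mul, pk_add_norm_one hn hp ha0' hb0', one_mul]
        rw [h1]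
        exact Padic.nonarchimedean _ _
  -- injectivity
  have hinj : Set.InjOn F (U ×ˢ U) := by
    intro a ha b hb h
    have hd := hiso a ha b hb
    rw [h, dist_self] at hd
    exact dist_eq_zero.1 hd.symm
  -- surjectivity
  have hsurj : Set.SurjOn F (U ×ˢ U) (U ×ˢ D) := by
    rintro ⟨a, x⟩ hy
    obtain ⟨hya, hyx⟩ := Set.mem_prod.1 hy
    have hya' : ‖a - 1‖ ≤ r := hya
    have hyx' : ‖x‖ ≤ r := hyx
    obtain ⟨w, hw, hphiw⟩ := pk_phi_surj hn hp hyx'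
    have hna := pk_norm_one_of_mem hn hya'
    have hnw := pk_norm_one_of_mem hn hw
    have ha0 : a ≠ 0 := fun h => by simp [h] at hna
    have hw0 : w ≠ 0 := fun h => by simp [h] at hnw
    refine ⟨(a * w⁻¹, a * w),
      Set.mem_prod.2 ⟨pk_mul_mem hn hya' (pk_inv_mem hn hw), pk_mul_mem hn hya' hw⟩, ?_⟩
    have e1 : (a * w) * (a * w⁻¹) = a ^ 2 := by field_simp
    have e2 : (a * w) * (a * w⁻¹)⁻¹ = w ^ 2 := by field_simp
    show F (a * w⁻¹, a * w) = (a, x)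
    simp only [hFdef]
    rw [e1, e2, pk_sqrt_sq hn hp hya', pk_sqrt_sq hn hp hw, hphiw]
  -- measurability
  have hcontsqrt : Continuous (padicSqrt p n) := pk_sqrt_continuous hn hp
  have hFmeas : Measurable F := by
    have h1 : Measurable fun x : ℚ_[p] × ℚ_[p] => padicSqrt p n (x.2 * x.1) :=
      hcontsqrt.measurable.comp (measurable_snd.mul measurable_fst)
    have h2 : Measurable fun x : ℚ_[p] × ℚ_[p] => padicSqrt p n (x.2 * x.1⁻¹) :=
      hcontsqrt.measurable.comp (measurable_snd.mul measurable_fst.inv)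
    exact h1.prodMk (h2.sub h2.inv)
  refine ⟨⟨hmaps, hinj, hsurj⟩, hFmeas, ?_⟩
  have hmaps' := hmaps
  have hsurj' := hsurj
  have hiso' := hiso
  rw [hS, hT] at hmaps' hsurj'
  rw [hS] at hiso'
  rw [hS, hT]
  refine iso_map_measure ?_ (μ.prod μ) ?_ ?_ F hFmeas _ _ r hrpos hmaps' hsurj' hiso'
  · -- ultrametric inequality in the product
    intro x y z
    rw [Prod.dist_eq, Prod.dist_eq, Prod.dist_eq]
    have c1 := IsUltrametricDist.dist_triangle_max x.1 y.1 z.1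
    have c2 := IsUltrametricDist.dist_triangle_max x.2 y.2 z.2
    apply max_le
    · exact le_trans c1 (max_le_max (le_max_left _ _) (le_max_left _ _))
    · exact le_trans c2 (max_le_max (le_max_right _ _) (le_max_right _ _))
  · -- ball measures depend only on the radius
    have hμball : ∀ (c : ℚ_[p]) (t : ℝ),
        μ (Metric.closedBall c t) = μ (Metric.closedBall 0 t) := by
      intro c t
      have e : Metric.closedBall c t = (fun y => y + (-c)) ⁻¹' Metric.closedBall (0:ℚ_[p]) t := by
        ext y
        simp [Metric.mem_closedBall, dist_eq_norm, sub_eq_add_neg]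
      rw [e, measure_preimage_add_right]
    intro c c' t
    have key : ∀ c : ℚ_[p] × ℚ_[p],
        (μ.prod μ) (Metric.closedBall c t) = μ (Metric.closedBall (0:ℚ_[p]) t) * μ (Metric.closedBall (0:ℚ_[p]) t) := by
      intro c
      have e : Metric.closedBall c t = Metric.closedBall c.1 t ×ˢ Metric.closedBall c.2 t := by
        rw [closedBall_prod_same, Prod.mk.eta]
      rw [e, Measure.prod_prod, hμball c.1 t, hμball c.2 t]
    rw [key c, key c']
  · -- finiteness on closed balls
    intro c t
    exact (isCompact_closedBall c t).measure_lt_top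
end
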